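/- arXiv:1602.04331 — 2 statements merged into one kernel-verified Lean document; each statement's English description precedes it below -/
import Mathlib

section
/- Let γ be a mapping from the set of nontrivial, surjective, monotone (j,2) games on n players to the standard simplex Δ_n satisfying the transfer axiom γ(u) + γ(w) = γ(u∨w) + γ(u∧w) whenever all four games are nontrivial surjective monotone (j,2) games. Then γ is uniquely determined by its values on games with a unique minimal winning vector; concretely, if v has minimal winning vectors a¹,…,aˡ with l ≥ 2, then γ(v) = γ(x) + γ(u_{aˡ}) − γ(x ∧ u_{aˡ}) where x = u_{a¹} ∨ ⋯ ∨ u_{a^{l−1}} and u_a denotes the game with unique minimal winning vector a, and x ∧ u_{aˡ} has at most l−1 minimal winning vectors. -/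
open Finset

/-- `(j,2)` games: inputs in `{1,…,j}` encoded as `Fin j`, outputs in `{1,2}` encoded as
`Fin 2` (`losing ↦ 0`, `winning ↦ 1`). A nontrivial surjective monotone `(j,2)` game: -/
def Good {n j : ℕ} (v : (Fin n → Fin j) → Fin 2) : Prop :=
  Monotone v ∧ Function.Surjective v

instance {n j : ℕ} : DecidableRel ((· ≤ ·) : (Fin n → Fin j) → (Fin n → Fin j) → Prop) :=
  fun a b => decidable_of_iff (∀ l, a l ≤ b l) Iff.rfl

/-- `a` is a minimal winning vector of `v`. -/
def MinWinning {n j : ℕ} (v : (Fin n → Fin j) → Fin 2) (a : Fin n → Fin j) : Prop :=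
  v a = 1 ∧ ∀ b : Fin n → Fin j, b < a → v b = 0

instance {n j : ℕ} : DecidableRel ((· < ·) : (Fin n → Fin j) → (Fin n → Fin j) → Prop) :=
  fun a b => decidable_of_iff (a ≤ b ∧ ¬b ≤ a) lt_iff_le_not_ge.symm

instance {n j : ℕ} (v : (Fin n → Fin j) → Fin 2) (a : Fin n → Fin j) :
    Decidable (MinWinning v a) := by
  unfold MinWinning; infer_instance

/-- The game `u_a` with unique minimal winning vector `a`. -/
def ua {n j : ℕ} (a : Fin n → Fin j) : (Fin n → Fin j) → Fin 2 :=
  fun b => if a ≤ b then 1 else 0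

lemma fin2_eq_zero_or_one (a : Fin 2) : a = 0 ∨ a = 1 := by revert a; decide

lemma fin2_max_eq_one {a b : Fin 2} : max a b = 1 ↔ a = 1 ∨ b = 1 := by revert a b; decide

lemma fin2_min_eq_one {a b : Fin 2} : min a b = 1 ↔ a = 1 ∧ b = 1 := by revert a b; decide

/-- Every winning vector of a game is above a minimal winning vector. -/
lemma exists_minWinning_le {n j : ℕ} {v : (Fin n → Fin j) → Fin 2} {b : Fin n → Fin j}
    (hb : v b = 1) : ∃ c, MinWinning v c ∧ c ≤ b := by
  classical
  set S : Finset (Fin n → Fin j) := Finset.univ.filter (fun c => c ≤ b ∧ v c = 1) with hS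
  have hbS : b ∈ S := by simp [hS, hb]
  obtain ⟨m, hmS, hmin⟩ : ∃ m ∈ S, ∀ x ∈ S, ¬ x < m := by
    obtain ⟨m, hm⟩ := Finset.exists_minimal (s := S) ⟨b, hbS⟩
    exact ⟨m, hm.1, fun x hx hlt => hlt.not_ge (hm.2 hx hlt.le)⟩
  simp only [hS, Finset.mem_filter, Finset.mem_univ, true_and] at hmS hmin
  refine ⟨m, ⟨hmS.2, fun d hd => ?_⟩, hmS.1⟩
  rcases fin2_eq_zero_or_one (v d) with h | h
  · exact h
  · exact absurd hd (hmin d ⟨le_trans hd.le hmS.1, h⟩)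

/-- The recursion step: a simplex-valued mapping `γ` on nontrivial surjective monotone
`(j,2)` games satisfying the transfer axiom is determined by its values on games with a
unique minimal winning vector.  Concretely, if the minimal winning vectors of `v` form
the set `A` with `|A| = l ≥ 2` and `a0 ∈ A`, then with
`x = ⋁_{c ∈ A ∖ {a0}} u_c` one has `γ(v) = γ(x) + γ(u_{a0}) − γ(x ∧ u_{a0})`, and
`x ∧ u_{a0}` has at most `l − 1` minimal winning vectors. -/
theorem transfer_recursion {n j : ℕ} (hj : 2 ≤ j)
    (γ : ((Fin n → Fin j) → Fin 2) → (Fin n → ℝ))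
    (hsimplex : ∀ v : (Fin n → Fin j) → Fin 2, Good v →
      (∀ i, γ v i ∈ Set.Icc (0 : ℝ) 1) ∧ ∑ i, γ v i = 1)
    (htransfer : ∀ u w : (Fin n → Fin j) → Fin 2, Good u → Good w →
      Good (fun b => max (u b) (w b)) → Good (fun b => min (u b) (w b)) →
      ∀ i, γ u i + γ w i =
        γ (fun b => max (u b) (w b)) i + γ (fun b => min (u b) (w b)) i)
    (v : (Fin n → Fin j) → Fin 2) (hv : Good v)
    (A : Finset (Fin n → Fin j)) (hA : ∀ a, MinWinning v a ↔ a ∈ A)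
    (hcard : 2 ≤ A.card) (a0 : Fin n → Fin j) (ha0 : a0 ∈ A) :
    (∀ i, γ v i =
        γ (fun b => if ∃ c ∈ A.erase a0, c ≤ b then 1 else 0) i + γ (ua a0) i -
          γ (fun b =>
              min ((fun b => if ∃ c ∈ A.erase a0, c ≤ b then (1 : Fin 2) else 0) b)
                (ua a0 b)) i) ∧
      ((Finset.univ : Finset (Fin n → Fin j)).filter
          (fun a => MinWinning (fun b =>
            min ((fun b => if ∃ c ∈ A.erase a0, c ≤ b then (1 : Fin 2) else 0) b)
              (ua a0 b)) a)).card ≤ A.card - 1 := by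
  classical
  obtain ⟨hmono, hsurj⟩ := hv
  obtain ⟨b0, hb0⟩ := hsurj 0
  set x : (Fin n → Fin j) → Fin 2 :=
    fun b => if ∃ c ∈ A.erase a0, c ≤ b then 1 else 0 with hxdef
  set m : (Fin n → Fin j) → Fin 2 := fun b => min (x b) (ua a0 b) with hmdef
  -- basic characterization of v, x, ua
  have hxone : ∀ b, x b = 1 ↔ ∃ c ∈ A.erase a0, c ≤ b := by
    intro b
    by_cases h : ∃ c ∈ A.erase a0, c ≤ b <;> simp [hxdef, h] <;> tauto
  have huone : ∀ a b : Fin n → Fin j, ua a b = 1 ↔ a ≤ b := by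
    intro a b
    by_cases h : a ≤ b <;> simp [ua, h]
  have hAwin : ∀ c ∈ A, v c = 1 := fun c hc => ((hA c).2 hc).1
  have hb0A : ∀ c ∈ A, ¬ c ≤ b0 := by
    intro c hc hle
    have := hmono hle
    rw [hAwin c hc, hb0] at this
    exact absurd this (by decide)
  have hvone : ∀ b, v b = 1 ↔ ∃ c ∈ A, c ≤ b := by
    intro b
    constructor
    · intro hb
      obtain ⟨c, hc, hcb⟩ := exists_minWinning_le hb
      exact ⟨c, (hA c).1 hc, hcb⟩
    · rintro ⟨c, hc, hcb⟩
      have := hmono hcb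
      rw [hAwin c hc] at this
      rcases fin2_eq_zero_or_one (v b) with h | h
      · rw [h] at this; exact absurd this (by decide)
      · exact h
  -- a vector winning for both x and ua a0
  obtain ⟨c1, hc1⟩ : (A.erase a0).Nonempty := by
    rw [← Finset.card_pos, Finset.card_erase_of_mem ha0]; omega
  -- Good x
  have hxmono : Monotone x := by
    intro b b' hbb'
    rcases fin2_eq_zero_or_one (x b) with h | h
    · rw [h]; exact Fin.zero_le _
    · obtain ⟨c, hc, hcb⟩ := (hxone b).1 h
      rw [h, (hxone b').2 ⟨c, hc, le_trans hcb hbb'⟩]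
  have hxgood : Good x := by
    refine ⟨hxmono, fun y => ?_⟩
    rcases fin2_eq_zero_or_one y with rfl | rfl
    · refine ⟨b0, ?_⟩
      rcases fin2_eq_zero_or_one (x b0) with h | h
      · exact h
      · obtain ⟨c, hc, hcb⟩ := (hxone b0).1 h
        exact absurd hcb (hb0A c (Finset.mem_of_mem_erase hc))
    · exact ⟨c1, (hxone c1).2 ⟨c1, hc1, le_refl _⟩⟩
  -- Good (ua a0)
  have humono : Monotone (ua a0) := by
    intro b b' hbb'
    rcases fin2_eq_zero_or_one (ua a0 b) with h | h
    · rw [h]; exact Fin.zero_le _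
    · rw [h, (huone a0 b').2 (le_trans ((huone a0 b).1 h) hbb')]
  have hugood : Good (ua a0) := by
    refine ⟨humono, fun y => ?_⟩
    rcases fin2_eq_zero_or_one y with rfl | rfl
    · refine ⟨b0, ?_⟩
      rcases fin2_eq_zero_or_one (ua a0 b0) with h | h
      · exact h
      · exact absurd ((huone a0 b0).1 h) (hb0A a0 ha0)
    · exact ⟨a0, (huone a0 a0).2 (le_refl _)⟩
  -- max(x, ua a0) = v
  have hmaxv : (fun b => max (x b) (ua a0 b)) = v := by
    funext b
    rcases fin2_eq_zero_or_one (max (x b) (ua a0 b)) with h | h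
    · rw [h]
      rcases fin2_eq_zero_or_one (v b) with h' | h'
      · rw [h']
      · obtain ⟨c, hc, hcb⟩ := (hvone b).1 h'
        by_cases hca : c = a0
        · rw [hca] at hcb
          rw [fin2_max_eq_one.2 (Or.inr ((huone a0 b).2 hcb))] at h
          exact absurd h (by decide)
        · rw [fin2_max_eq_one.2
            (Or.inl ((hxone b).2 ⟨c, Finset.mem_erase.2 ⟨hca, hc⟩, hcb⟩))] at h
          exact absurd h (by decide)
    · rw [h]
      rcases fin2_max_eq_one.1 h with h' | h'
      · obtain ⟨c, hc, hcb⟩ := (hxone b).1 h'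
        exact ((hvone b).2 ⟨c, Finset.mem_of_mem_erase hc, hcb⟩).symm
      · exact ((hvone b).2 ⟨a0, ha0, (huone a0 b).1 h'⟩).symm
  -- characterization of m
  have hmone : ∀ b, m b = 1 ↔ (∃ c ∈ A.erase a0, c ≤ b) ∧ a0 ≤ b := by
    intro b
    rw [hmdef]
    simp only
    rw [fin2_min_eq_one, hxone, huone]
  -- Good m
  have hmmono : Monotone m := fun b b' h => min_le_min (hxmono h) (humono h)
  have hmgood : Good m := by
    refine ⟨hmmono, fun y => ?_⟩
    rcases fin2_eq_zero_or_one y with rfl | rfl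
    · refine ⟨b0, ?_⟩
      rcases fin2_eq_zero_or_one (m b0) with h | h
      · exact h
      · obtain ⟨⟨c, hc, hcb⟩, _⟩ := (hmone b0).1 h
        exact absurd hcb (hb0A c (Finset.mem_of_mem_erase hc))
    · exact ⟨c1 ⊔ a0, (hmone _).2 ⟨⟨c1, hc1, le_sup_left⟩, le_sup_right⟩⟩
  constructor
  · intro i
    have := htransfer x (ua a0) hxgood hugood (by rw [hmaxv]; exact ⟨hmono, hsurj⟩) hmgood i
    rw [hmaxv] at this
    have hm' : γ (fun b => min (x b) (ua a0 b)) i = γ m i := by rw [hmdef]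
    rw [hm'] at this
    linarith
  · -- cardinality bound
    have hsub : (Finset.univ.filter (fun a => MinWinning m a)) ⊆
        (A.erase a0).image (fun c => c ⊔ a0) := by
      intro b hb
      rw [Finset.mem_filter] at hb
      obtain ⟨-, hb1, hbmin⟩ := hb
      obtain ⟨⟨c, hc, hcb⟩, ha0b⟩ := (hmone b).1 hb1
      have hsle : c ⊔ a0 ≤ b := sup_le hcb ha0b
      have hms : m (c ⊔ a0) = 1 := (hmone _).2 ⟨⟨c, hc, le_sup_left⟩, le_sup_right⟩
      have : c ⊔ a0 = b := by
        by_contra hne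
        have := hbmin _ (lt_of_le_of_ne hsle hne)
        rw [hms] at this
        exact absurd this (by decide)
      rw [Finset.mem_image]
      exact ⟨c, hc, this⟩
    calc (Finset.univ.filter (fun a => MinWinning m a)).card
        ≤ ((A.erase a0).image (fun c => c ⊔ a0)).card := Finset.card_le_card hsub
      _ ≤ (A.erase a0).card := Finset.card_image_le
      _ = A.card - 1 := Finset.card_erase_of_mem ha0
end

section
/- Let w₁,…,wₙ ∈ [0,1] with ∑ wᵢ = 1 and let f₁,…,fₙ : [0,1] → [0,1] be continuous monotone functions with fᵢ(0) = 0 and fᵢ(1) = 1. Then v(x) = ∑ᵢ wᵢ·fᵢ(xᵢ) is a surjective, monotone, continuous ([0,1],[0,1]) game, and the continuous influence measure satisfies φᵢ(v) = wᵢ for all i. -/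
open MeasureTheory

/-- Maximal extension for continuous games: undeclared coordinates set to `1`. -/
noncomputable def cvbar {n : ℕ} (v : (Fin n → ℝ) → ℝ) (π : Equiv.Perm (Fin n))
    (x : Fin n → ℝ) (h : ℕ) : ℝ :=
  v (fun l => if (π l : ℕ) < h then x l else 1)

/-- Minimal extension: undeclared coordinates set to `0`. -/
noncomputable def cvbot {n : ℕ} (v : (Fin n → ℝ) → ℝ) (π : Equiv.Perm (Fin n))
    (x : Fin n → ℝ) (h : ℕ) : ℝ :=
  v (fun l => if (π l : ℕ) < h then x l else 0)

/-- Influence measure for continuous `([0,1],[0,1])` games (Definition 6.3); player `i`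
is at 1-indexed position `π i + 1`. -/
noncomputable def cphi {n : ℕ} (v : (Fin n → ℝ) → ℝ) (i : Fin n) : ℝ :=
  (1 / (n.factorial : ℝ)) *
    ∑ π : Equiv.Perm (Fin n),
      ∫ x in Set.Icc (0 : Fin n → ℝ) 1,
        ((cvbar v π x (π i) - cvbot v π x (π i)) -
          (cvbar v π x ((π i : ℕ) + 1) - cvbot v π x ((π i : ℕ) + 1)))

/-- Theorem 6.4: the weighted sum `v(x) = ∑ wᵢ·fᵢ(xᵢ)` of continuous monotone functions
`fᵢ : [0,1] → [0,1]` with `fᵢ(0)=0`, `fᵢ(1)=1` and weights summing to one is a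
surjective, monotone, continuous `([0,1],[0,1])` game, and `φᵢ(v) = wᵢ`. -/
theorem cphi_weighted_sum {n : ℕ} (w : Fin n → ℝ)
    (hw : ∀ i, w i ∈ Set.Icc (0 : ℝ) 1) (hw1 : ∑ i, w i = 1)
    (f : Fin n → ℝ → ℝ)
    (hfc : ∀ i, ContinuousOn (f i) (Set.Icc 0 1))
    (hfm : ∀ i, MonotoneOn (f i) (Set.Icc 0 1))
    (hfmap : ∀ i, Set.MapsTo (f i) (Set.Icc 0 1) (Set.Icc 0 1))
    (hf0 : ∀ i, f i 0 = 0) (hf1 : ∀ i, f i 1 = 1) :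
    Set.MapsTo (fun x : Fin n → ℝ => ∑ i, w i * f i (x i))
        (Set.Icc 0 1) (Set.Icc (0 : ℝ) 1) ∧
    Set.SurjOn (fun x : Fin n → ℝ => ∑ i, w i * f i (x i))
        (Set.Icc 0 1) (Set.Icc (0 : ℝ) 1) ∧
    MonotoneOn (fun x : Fin n → ℝ => ∑ i, w i * f i (x i)) (Set.Icc 0 1) ∧
    ContinuousOn (fun x : Fin n → ℝ => ∑ i, w i * f i (x i)) (Set.Icc 0 1) ∧
    ∀ i, cphi (fun x => ∑ i, w i * f i (x i)) i = w i := by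
  have hmem : ∀ x : Fin n → ℝ, x ∈ Set.Icc (0 : Fin n → ℝ) 1 → ∀ i, x i ∈ Set.Icc (0:ℝ) 1 :=
    fun x hx i => ⟨hx.1 i, hx.2 i⟩
  refine ⟨?_, ?_, ?_, ?_, ?_⟩
  · intro x hx
    constructor
    · exact Finset.sum_nonneg fun i _ => mul_nonneg (hw i).1 ((hfmap i (hmem x hx i)).1)
    · calc ∑ i, w i * f i (x i) ≤ ∑ i, w i := Finset.sum_le_sum fun i _ =>
            mul_le_of_le_one_right (hw i).1 ((hfmap i (hmem x hx i)).2)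
        _ = 1 := hw1
  · intro y hy
    have hg : ContinuousOn (fun t : ℝ => ∑ i, w i * f i t) (Set.Icc 0 1) :=
      continuousOn_finset_sum _ fun i _ => continuousOn_const.mul (hfc i)
    have h0 : (∑ i, w i * f i 0) = 0 := by simp [hf0]
    have h1 : (∑ i, w i * f i 1) = 1 := by simp [hf1, hw1]
    have hiv := intermediate_value_Icc (by norm_num : (0:ℝ) ≤ 1) hg
    rw [h0, h1] at hiv
    obtain ⟨t, ht, hgt⟩ := hiv hy
    exact ⟨fun _ => t, ⟨fun i => ht.1, fun i => ht.2⟩, hgt⟩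
  · intro x hx y hy hxy
    exact Finset.sum_le_sum fun i _ => mul_le_mul_of_nonneg_left
      (hfm i (hmem x hx i) (hmem y hy i) (hxy i)) (hw i).1
  · exact continuousOn_finset_sum _ fun i _ => continuousOn_const.mul
      ((hfc i).comp (continuous_apply i).continuousOn fun x hx => hmem x hx i)
  · intro i
    have key : ∀ π : Equiv.Perm (Fin n), ∀ x : Fin n → ℝ,
        ((cvbar (fun x => ∑ i, w i * f i (x i)) π x (π i)
            - cvbot (fun x => ∑ i, w i * f i (x i)) π x (π i)) -
          (cvbar (fun x => ∑ i, w i * f i (x i)) π x ((π i : ℕ) + 1)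
            - cvbot (fun x => ∑ i, w i * f i (x i)) π x ((π i : ℕ) + 1))) = w i := by
      intro π x
      have hd : ∀ c : ℝ,
          (∑ l, w l * f l (if (π l : ℕ) < (π i : ℕ) then x l else c)) -
          (∑ l, w l * f l (if (π l : ℕ) < (π i : ℕ) + 1 then x l else c)) =
          w i * f i c - w i * f i (x i) := by
        intro c
        rw [← Finset.sum_sub_distrib,
          Finset.sum_eq_single i (fun l _ hl => by
            have hne : (π l : ℕ) ≠ (π i : ℕ) := fun h => hl (π.injective (Fin.ext h))
            have hiff : ((π l : ℕ) < (π i : ℕ)) ↔ ((π l : ℕ) < (π i : ℕ) + 1) := by omega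
            rw [if_congr hiff rfl rfl]; ring)
          (fun h => absurd (Finset.mem_univ i) h)]
        simp
      simp only [cvbar, cvbot]
      have h1 := hd 1
      have h0 := hd 0
      rw [hf1 i] at h1
      rw [hf0 i] at h0
      linarith
    have hvol : (volume (Set.Icc (0 : Fin n → ℝ) 1)).toReal = 1 := by
      rw [Real.volume_Icc_pi_toReal (fun i => by norm_num : (0 : Fin n → ℝ) ≤ 1)]
      simp
    have hint : ∀ π : Equiv.Perm (Fin n),
        (∫ x in Set.Icc (0 : Fin n → ℝ) 1,
          ((cvbar (fun x => ∑ i, w i * f i (x i)) π x (π i)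
              - cvbot (fun x => ∑ i, w i * f i (x i)) π x (π i)) -
            (cvbar (fun x => ∑ i, w i * f i (x i)) π x ((π i : ℕ) + 1)
              - cvbot (fun x => ∑ i, w i * f i (x i)) π x ((π i : ℕ) + 1)))) = w i := by
      intro π
      simp only [key π]
      rw [MeasureTheory.setIntegral_const, MeasureTheory.measureReal_def, hvol, one_smul]
    rw [cphi]
    simp only [hint]
    rw [Finset.sum_const, Finset.card_univ, Fintype.card_perm, nsmul_eq_mul]
    have : (n.factorial : ℝ) ≠ 0 := Nat.cast_ne_zero.mpr n.factorial_ne_zero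
    field_simp
    rw [Fintype.card_fin]
end
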